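/- Let F be an m×n real matrix, let v_1,…,v_n be a basis of ℝ^n, let λ_1,…,λ_p and β_1,…,β_p be real numbers, and suppose: for each i ∈ {1,…,p}, (A+BF)·v_i = λ_i·v_i and (C+DF)·v_i = β_i·e_i (where e_i is the i-th standard basis vector of ℝ^p); and for each i ∈ {p+1,…,n}, (A+BF)·v_i ∈ span{v_{p+1},…,v_n} and (C+DF)·v_i = 0. Then for every ξ₀ ∈ ℝ^n, writing ξ₀ = Σ_{i=1}^n α_i·v_i with α_i ∈ ℝ, one has for every t ∈ ℝ and every k ∈ {1,…,p}: the k-th component of (C+DF)·exp(t·(A+BF))·ξ₀ equals β_k·α_k·exp(λ_k·t). -/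

import Mathlib

attribute [local instance] Matrix.linftyOpNormedAddCommGroup Matrix.linftyOpNormedRing
  Matrix.linftyOpNormedAlgebra

open NormedSpace Nat

noncomputable def mulVecCLM {n : ℕ} (w : Fin n → ℝ) :
    Matrix (Fin n) (Fin n) ℝ →L[ℝ] (Fin n → ℝ) :=
  LinearMap.toContinuousLinearMap
    { toFun := fun X => X.mulVec w
      map_add' := fun X Y => Matrix.add_mulVec X Y w
      map_smul' := fun c X => Matrix.smul_mulVec c X w }

lemma exp_mulVec_hasSum {n : ℕ} (M : Matrix (Fin n) (Fin n) ℝ) (w : Fin n → ℝ) :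
    HasSum (fun j : ℕ => (j ! : ℝ)⁻¹ • (M ^ j).mulVec w) ((exp M).mulVec w) := by
  have hs : HasSum (fun j : ℕ => (j ! : ℝ)⁻¹ • M ^ j) (exp M) := by
    rw [exp_eq_tsum ℝ]
    exact (expSeries_summable' (𝕂 := ℝ) M).hasSum
  have := (mulVecCLM w).hasSum hs
  simpa [mulVecCLM] using this

lemma pow_mulVec_eigen {n : ℕ} (M : Matrix (Fin n) (Fin n) ℝ) (w : Fin n → ℝ) (c : ℝ)
    (h : M.mulVec w = c • w) (j : ℕ) : (M ^ j).mulVec w = c ^ j • w := by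
  induction j with
  | zero => simp
  | succ k ih =>
      rw [pow_succ, ← Matrix.mulVec_mulVec, h, Matrix.mulVec_smul, ih, smul_smul,
        mul_comm, ← pow_succ]

lemma exp_mulVec_eigen {n : ℕ} (M : Matrix (Fin n) (Fin n) ℝ) (w : Fin n → ℝ) (c : ℝ)
    (h : M.mulVec w = c • w) : (exp M).mulVec w = Real.exp c • w := by
  have h1 := exp_mulVec_hasSum M w
  have h2 : HasSum (fun j : ℕ => (j ! : ℝ)⁻¹ • (M ^ j).mulVec w) (Real.exp c • w) := by
    have hc : HasSum (fun j : ℕ => (j ! : ℝ)⁻¹ • c ^ j) (Real.exp c) := by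
      rw [Real.exp_eq_exp_ℝ, exp_eq_tsum ℝ]
      exact (expSeries_summable' (𝕂 := ℝ) c).hasSum
    have := hc.smul_const w
    simpa [pow_mulVec_eigen M w c h, smul_smul] using this
  exact h1.unique h2

lemma exp_mulVec_mem {n : ℕ} (M : Matrix (Fin n) (Fin n) ℝ)
    (W : Submodule ℝ (Fin n → ℝ)) (hW : ∀ x ∈ W, M.mulVec x ∈ W)
    (w : Fin n → ℝ) (hw : w ∈ W) : (exp M).mulVec w ∈ W := by
  have hpow' : ∀ j : ℕ, ∀ x ∈ W, (M ^ j).mulVec x ∈ W := by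
    intro j
    induction j with
    | zero => intro x hx; simpa using hx
    | succ k ih =>
        intro x hx
        rw [pow_succ, ← Matrix.mulVec_mulVec]
        exact ih _ (hW _ hx)
  have hpow : ∀ j : ℕ, (M ^ j).mulVec w ∈ W := fun j => hpow' j w hw
  have h1 := exp_mulVec_hasSum M w
  have hcl : IsClosed (W : Set (Fin n → ℝ)) := Submodule.closed_of_finiteDimensional W
  refine hcl.mem_of_tendsto h1 (Filter.Eventually.of_forall fun s => ?_)
  exact Submodule.sum_mem W fun j _ => Submodule.smul_mem W _ (hpow j)

/-- Sufficiency computation in the proof of Lemma lem:Rosej: given a basis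
`v = (v_1,…,v_p, v_{p+1},…,v_n)` of `ℝ^n` (here `n = p + r`, the first `p` vectors indexed by
`Sum.inl`, the rest by `Sum.inr`) such that the first `p` vectors are closed-loop eigenvectors
with `(C+DF)v_i = β_i e_i` and the remaining ones span an `(A+BF)`-invariant subspace of
`ker(C+DF)`, the tracking error from `ξ₀ = Σ α_i v_i` satisfies
`ε(ξ₀,t)_k = β_k α_k exp(λ_k t)` for each output component `k`. -/
theorem single_mode_error_of_eigenstructure
    (p r m : ℕ) (hp : 0 < p) (hm : 0 < m)
    (A : Matrix (Fin (p + r)) (Fin (p + r)) ℝ) (B : Matrix (Fin (p + r)) (Fin m) ℝ)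
    (C : Matrix (Fin p) (Fin (p + r)) ℝ) (D : Matrix (Fin p) (Fin m) ℝ)
    (F : Matrix (Fin m) (Fin (p + r)) ℝ)
    (v : Fin p ⊕ Fin r → (Fin (p + r) → ℝ))
    (hli : LinearIndependent ℝ v)
    (hspan : Submodule.span ℝ (Set.range v) = ⊤)
    (lam β : Fin p → ℝ)
    (heig : ∀ k : Fin p, (A + B * F).mulVec (v (Sum.inl k)) = lam k • v (Sum.inl k))
    (hout : ∀ k : Fin p,
      (C + D * F).mulVec (v (Sum.inl k)) = β k • (Pi.single k 1 : Fin p → ℝ))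
    (hinv : ∀ i : Fin r, (A + B * F).mulVec (v (Sum.inr i)) ∈
      Submodule.span ℝ (Set.range fun i' : Fin r => v (Sum.inr i')))
    (hnull : ∀ i : Fin r, (C + D * F).mulVec (v (Sum.inr i)) = 0) :
    ∀ (ξ₀ : Fin (p + r) → ℝ) (α : Fin p ⊕ Fin r → ℝ),
      ξ₀ = ∑ i, α i • v i →
      ∀ (t : ℝ) (k : Fin p),
        ((C + D * F).mulVec
            ((NormedSpace.exp (t • (A + B * F))).mulVec ξ₀)) k =
          β k * α (Sum.inl k) * Real.exp (lam k * t) := by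
  intro ξ₀ α hξ t k
  subst hξ
  set M := A + B * F with hM
  set N := C + D * F with hN
  set W : Submodule ℝ (Fin (p + r) → ℝ) :=
    Submodule.span ℝ (Set.range fun i' : Fin r => v (Sum.inr i')) with hWdef
  -- M maps W into W, hence so does t • M
  have hWinv : ∀ x ∈ W, (t • M).mulVec x ∈ W := by
    intro x hx
    have hMx : M.mulVec x ∈ W := by
      induction hx using Submodule.span_induction with
      | mem y hy =>
          obtain ⟨i, rfl⟩ := hy
          exact hinv i
      | zero => simp [Matrix.mulVec_zero]
      | add y z _ _ hy hz => rw [Matrix.mulVec_add]; exact W.add_mem hy hz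
      | smul c y _ hy => rw [Matrix.mulVec_smul]; exact W.smul_mem c hy
    rw [Matrix.smul_mulVec]
    exact W.smul_mem t hMx
  -- N kills W
  have hNzero : ∀ x ∈ W, N.mulVec x = 0 := by
    intro x hx
    induction hx using Submodule.span_induction with
    | mem y hy =>
        obtain ⟨i, rfl⟩ := hy
        exact hnull i
    | zero => simp [Matrix.mulVec_zero]
    | add y z _ _ hy hz => rw [Matrix.mulVec_add, hy, hz, add_zero]
    | smul c y _ hy => rw [Matrix.mulVec_smul, hy, smul_zero]
  -- push linearity through
  have hlin : N.mulVec ((exp (t • M)).mulVec (∑ i, α i • v i)) =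
      ∑ i, α i • N.mulVec ((exp (t • M)).mulVec (v i)) := by
    simp only [← Matrix.mulVecLin_apply, map_sum, map_smul]
  rw [hlin]
  rw [Finset.sum_apply]
  rw [Fintype.sum_sum_type]
  have hzero : ∀ i : Fin r,
      (α (Sum.inr i) • N.mulVec ((exp (t • M)).mulVec (v (Sum.inr i)))) k = 0 := by
    intro i
    have hmem : v (Sum.inr i) ∈ W := Submodule.subset_span ⟨i, rfl⟩
    rw [hNzero _ (exp_mulVec_mem (t • M) W hWinv _ hmem)]
    simp
  rw [Finset.sum_congr rfl (fun i _ => hzero i), Finset.sum_const_zero, add_zero]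
  have heval : ∀ j : Fin p,
      (α (Sum.inl j) • N.mulVec ((exp (t • M)).mulVec (v (Sum.inl j)))) k =
      α (Sum.inl j) * (Real.exp (t * lam j) * (β j * (Pi.single j 1 : Fin p → ℝ) k)) := by
    intro j
    have he : (t • M).mulVec (v (Sum.inl j)) = (t * lam j) • v (Sum.inl j) := by
      rw [Matrix.smul_mulVec, heig j, smul_smul]
    rw [exp_mulVec_eigen _ _ _ he, Matrix.mulVec_smul, hout j]
    simp [mul_assoc]
  rw [Finset.sum_congr rfl (fun j _ => heval j)]
  rw [Finset.sum_eq_single k]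
  · simp [mul_comm t (lam k)]; ring
  · intro j _ hjk
    rw [Pi.single_eq_of_ne (Ne.symm hjk)]
    simp
  · intro h; exact absurd (Finset.mem_univ k) h
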